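/- Under the standing setup, suppose T_g is not a t-intersecting family, |T_f| = 1, and the unique member of T_f does not belong to T_g. Then |T_g| ≤ 2(ℓ−t+1). -/

import Mathlib

/-- The interval `[a,b] = {a, a+1, …, b}` as a finset of naturals. -/
def Iv (a b : ℕ) : Finset ℕ := Finset.Icc a b

/-- `ksubsets S k` is the family of all `k`-element subsets of `S`. -/
def ksubsets (S : Finset ℕ) (k : ℕ) : Finset (Finset ℕ) :=
  S.powerset.filter (fun F => F.card = k)

/-- Families `F` and `G` are cross `t`-intersecting. -/
def crossInt (t : ℕ) (F G : Finset (Finset ℕ)) : Prop :=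
  ∀ A ∈ F, ∀ B ∈ G, t ≤ (A ∩ B).card

/-- The `t`-covering number of a family of subsets of `[n]`. -/
noncomputable def tau (n t : ℕ) (F : Finset (Finset ℕ)) : ℕ :=
  sInf {c : ℕ | ∃ T : Finset ℕ, T ⊆ Finset.Icc 1 n ∧ T.card = c ∧ ∀ A ∈ F, t ≤ (T ∩ A).card}

/-- The collection of all `t`-covers of `F` of size `t+1`. -/
def covers (n t : ℕ) (F : Finset (Finset ℕ)) : Finset (Finset ℕ) :=
  (Finset.Icc 1 n).powerset.filter (fun T => T.card = t + 1 ∧ ∀ A ∈ F, t ≤ (T ∩ A).card)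

/-- `F ⊆ ksubsets S k` and `G ⊆ ksubsets S l` form a maximal cross `t`-intersecting pair. -/
def maximalCrossIn (S : Finset ℕ) (k l t : ℕ) (F G : Finset (Finset ℕ)) : Prop :=
  F ⊆ ksubsets S k ∧ G ⊆ ksubsets S l ∧ crossInt t F G ∧
  ∀ F' G' : Finset (Finset ℕ), F' ⊆ ksubsets S k → G' ⊆ ksubsets S l →
    crossInt t F' G' → F ⊆ F' → G ⊆ G' → F = F' ∧ G = G'

/-- Elementwise image of a family under a permutation. -/
def mapFam (σ : Equiv.Perm ℕ) (F : Finset (Finset ℕ)) : Finset (Finset ℕ) :=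
  F.image (fun A => A.image σ)

/-- `σ` is a permutation of `[n]` (maps `[n]` into, hence onto, itself). -/
def permOn (n : ℕ) (σ : Equiv.Perm ℕ) : Prop := ∀ x ∈ Finset.Icc 1 n, σ x ∈ Finset.Icc 1 n

/-- The pairs `(F, G)` and `(F', G')` are isomorphic via a permutation of `[n]`. -/
def isoPair (n : ℕ) (F G F' G' : Finset (Finset ℕ)) : Prop :=
  ∃ σ : Equiv.Perm ℕ, permOn n σ ∧ mapFam σ F = F' ∧ mapFam σ G = G'

/-- `F` and `F'` are isomorphic via a permutation of `[n]`. -/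
def isoFam (n : ℕ) (F F' : Finset (Finset ℕ)) : Prop :=
  ∃ σ : Equiv.Perm ℕ, permOn n σ ∧ mapFam σ F = F'

/-- Construction `𝒜(k,t) = {F ∈ C([n],k) : |F ∩ [t+2]| ≥ t+1}`. -/
def famA (n k t : ℕ) : Finset (Finset ℕ) :=
  (ksubsets (Iv 1 n) k).filter (fun F => t + 1 ≤ (F ∩ Iv 1 (t+2)).card)

/-- Construction `𝒞₁(ℓ,t) = {[ℓ+1]\{i} : i ∈ [t+1]} ∪ {G ∈ C([n],ℓ) : [t+1] ⊆ G}`. -/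
def famC1 (n l t : ℕ) : Finset (Finset ℕ) :=
  (Iv 1 (t+1)).image (fun i => (Iv 1 (l+1)).erase i) ∪
  (ksubsets (Iv 1 n) l).filter (fun G => Iv 1 (t+1) ⊆ G)

/-- Construction `𝒞₂(k,t;ℓ)`. -/
def famC2 (n k t l : ℕ) : Finset (Finset ℕ) :=
  (ksubsets (Iv 1 n) k).filter
    (fun F => (F ∩ Iv 1 (t+1)).card = t ∧ 1 ≤ (F ∩ Iv (t+2) (l+1)).card) ∪
  (ksubsets (Iv 1 n) k).filter (fun F => Iv 1 (t+1) ⊆ F)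

/-- Construction `ℋ(k,t;X,Y) = {F ∈ C([n],k) : [t] ⊆ F, |F∩Y| ≥ 1} ∪ {(X∪[t])\{i} : i ∈ [t]}`. -/
def famH (n k t : ℕ) (X Y : Finset ℕ) : Finset (Finset ℕ) :=
  (ksubsets (Iv 1 n) k).filter (fun F => Iv 1 t ⊆ F ∧ 1 ≤ (F ∩ Y).card) ∪
  (Iv 1 t).image (fun i => (X ∪ Iv 1 t).erase i)

/-- Construction `ℬ(k;(a₁,a₂,a₃,a₄))`. -/
def famB (n k a1 a2 a3 a4 : ℕ) : Finset (Finset ℕ) :=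
  (ksubsets (Iv 1 n) k).filter
    (fun F => ({a1, a2} : Finset ℕ) ⊆ F ∨ ({a2, a3} : Finset ℕ) ⊆ F ∨ ({a3, a4} : Finset ℕ) ⊆ F)

/-- Binomial coefficient `C(a,b)` for integers, `0` if `b < 0` or `b > a`. -/
def ch (a b : ℤ) : ℤ := if 0 ≤ b ∧ b ≤ a then (Nat.choose a.toNat b.toNat : ℤ) else 0

/-- `g(m,x,y,t) = m·C(n−t−1,x−t−1) + y(t+1)(y−t+1)·C(n−t−2,x−t−2)`. -/
def gfun (n m x y t : ℤ) : ℤ :=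
  m * ch (n - t - 1) (x - t - 1) + y * (t + 1) * (y - t + 1) * ch (n - t - 2) (x - t - 2)

/-- `a(x,t) = (t+2)·C(n−t−2,x−t−1) + C(n−t−2,x−t−2)`. -/
def afun (n x t : ℤ) : ℤ := (t + 2) * ch (n - t - 2) (x - t - 1) + ch (n - t - 2) (x - t - 2)

/-- `c₁(y,t) = C(n−t−1,y−t−1) + t + 1`. -/
def c1fun (n y t : ℤ) : ℤ := ch (n - t - 1) (y - t - 1) + t + 1

/-- `c₂(x,y,t) = (t+1)(C(n−t−1,x−t) − C(n−y−1,x−t)) + C(n−t−1,x−t−1)`. -/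
def c2fun (n x y t : ℤ) : ℤ :=
  (t + 1) * (ch (n - t - 1) (x - t) - ch (n - y - 1) (x - t)) + ch (n - t - 1) (x - t - 1)

/-- `h(x,y,t) = C(n−t,x−t) − C(n−y−1,x−t) + t`. -/
def hfun (n x y t : ℤ) : ℤ := ch (n - t) (x - t) - ch (n - y - 1) (x - t) + t
/-- Lemma 2.6(i). -/
theorem single_cover_not_contained
    (n k l t : ℕ) (hn0 : 0 < n) (ht0 : 0 < t) (hk : t + 1 ≤ k) (hl : t + 1 ≤ l)
    (hn : (t+1)^2 * (k+l)^2 * (k - t + 1) * (l - t + 1) + k + l - t ≤ n)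
    (F G : Finset (Finset ℕ))
    (hmax : maximalCrossIn (Iv 1 n) k l t F G)
    (htF : tau n t F = t + 1) (htG : tau n t G = t + 1)
    (hTg : ¬ crossInt t (covers n t G) (covers n t G))
    (hTf : (covers n t F).card = 1)
    (hnotin : ∀ A ∈ covers n t F, A ∉ covers n t G) :
    (covers n t G).card ≤ 2 * (l - t + 1) := by
  classical
  obtain ⟨hFsub, hGsub, hcross, hmaximal⟩ := hmax
  obtain ⟨That, hTf1⟩ := Finset.card_eq_one.mp hTf
  have hThatF : That ∈ covers n t F := by rw [hTf1]; exact Finset.mem_singleton_self _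
  have hThat := hThatF
  simp only [covers, Finset.mem_filter, Finset.mem_powerset] at hThat
  obtain ⟨hTsub, hTcard, hTcov⟩ := hThat
  have hnot : That ∉ covers n t G := hnotin That hThatF
  obtain ⟨G0, hG0G, hG0lt⟩ : ∃ G0 ∈ G, (That ∩ G0).card < t := by
    by_contra h
    push_neg at h
    exact hnot (by
      simp only [covers, Finset.mem_filter, Finset.mem_powerset]
      exact ⟨hTsub, hTcard, fun A hA => h A hA⟩)
  have hG0mem := hGsub hG0G
  simp only [ksubsets, Iv, Finset.mem_filter, Finset.mem_powerset] at hG0mem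
  obtain ⟨hG0sub, hG0card⟩ := hG0mem
  have hn' : k + 2*t + 2 ≤ n := by
    have h1 : k + l ≤ (t+1)^2 * (k+l)^2 * (k-t+1) * (l-t+1) := by
      calc k + l ≤ (k+l)^2 := by nlinarith
        _ ≤ (t+1)^2 * (k+l)^2 := Nat.le_mul_of_pos_left _ (by positivity)
        _ ≤ (t+1)^2 * (k+l)^2 * (k-t+1) := Nat.le_mul_of_pos_right _ (by omega)
        _ ≤ (t+1)^2 * (k+l)^2 * (k-t+1) * (l-t+1) := Nat.le_mul_of_pos_right _ (by omega)
    omega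
  have keyB : ∀ T' ∈ covers n t G, t ≤ (T' ∩ That).card := by
    intro T' hT'
    simp only [covers, Finset.mem_filter, Finset.mem_powerset] at hT'
    obtain ⟨hT'sub, hT'card, hT'cov⟩ := hT'
    have hUsub : That ∪ T' ⊆ Finset.Icc 1 n := Finset.union_subset hTsub hT'sub
    have hUcard : (That ∪ T').card ≤ 2*t + 2 :=
      le_trans (Finset.card_union_le _ _) (by omega)
    have hdcard : k - (t+1) ≤ (Finset.Icc 1 n \ (That ∪ T')).card := by
      rw [Finset.card_sdiff_of_subset hUsub, Nat.card_Icc]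
      omega
    obtain ⟨E, hEsub, hEcard⟩ :=
      Finset.exists_subset_card_eq (s := Finset.Icc 1 n \ (That ∪ T')) (n := k - (t+1)) hdcard
    have hET : ∀ x ∈ E, x ∉ That ∪ T' := fun x hx => (Finset.mem_sdiff.mp (hEsub hx)).2
    have hdisj : Disjoint T' E := Finset.disjoint_left.mpr
      (fun {x} hx hxE => hET x hxE (Finset.mem_union_right _ hx))
    have hF'card : (T' ∪ E).card = k := by
      rw [Finset.card_union_of_disjoint hdisj, hT'card, hEcard]
      omega
    have hF'sub : T' ∪ E ⊆ Finset.Icc 1 n :=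
      Finset.union_subset hT'sub (hEsub.trans (Finset.sdiff_subset))
    have hF'mem : T' ∪ E ∈ ksubsets (Iv 1 n) k := by
      simp only [ksubsets, Iv, Finset.mem_filter, Finset.mem_powerset]
      exact ⟨hF'sub, hF'card⟩
    have hcross' : crossInt t (insert (T' ∪ E) F) G := by
      intro A hA B hB
      rcases Finset.mem_insert.mp hA with rfl | hA'
      · exact le_trans (hT'cov B hB)
          (Finset.card_le_card (Finset.inter_subset_inter Finset.subset_union_left (subset_refl _)))
      · exact hcross A hA' B hB
    have heq := hmaximal (insert (T' ∪ E) F) G (Finset.insert_subset hF'mem hFsub) hGsub hcross'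
      (Finset.subset_insert _ _) (subset_refl _)
    have hF'F : T' ∪ E ∈ F := by rw [heq.1]; exact Finset.mem_insert_self _ _
    have ht1 : t ≤ (That ∩ (T' ∪ E)).card := hTcov _ hF'F
    have hsub2 : That ∩ (T' ∪ E) ⊆ T' ∩ That := by
      intro x hx
      rw [Finset.mem_inter] at hx ⊢
      rcases Finset.mem_union.mp hx.2 with h | h
      · exact ⟨h, hx.1⟩
      · exact absurd (Finset.mem_union_left _ hx.1) (hET x h)
    exact le_trans ht1 (Finset.card_le_card hsub2)
  have hstruct : ∀ T' ∈ covers n t G,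
      (That \ T').sum id ∈ That \ G0 ∧ (T' \ That).sum id ∈ G0 \ That ∧
      T' = insert ((T' \ That).sum id) (That.erase ((That \ T').sum id)) ∧
      (That ∩ G0).card = t - 1 := by
    intro T' hT'mem
    have hkB := keyB T' hT'mem
    have hne : T' ≠ That := by
      intro h; exact hnot (h ▸ hT'mem)
    simp only [covers, Finset.mem_filter, Finset.mem_powerset] at hT'mem
    obtain ⟨hT'sub, hT'card, hT'cov⟩ := hT'mem
    have hle : (T' ∩ That).card ≤ t := by
      by_contra h
      push_neg at h
      have h3 : T' ∩ That = T' :=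
        Finset.eq_of_subset_of_card_le Finset.inter_subset_left (by omega)
      have h4 : T' ⊆ That := by rw [← h3]; exact Finset.inter_subset_right
      exact hne (Finset.eq_of_subset_of_card_le h4 (by omega))
    have hieq : (T' ∩ That).card = t := le_antisymm hle hkB
    have hxcard : (That \ T').card = 1 := by
      have h := Finset.card_sdiff_add_card_inter That T'
      rw [Finset.inter_comm That T'] at h
      omega
    have hycard : (T' \ That).card = 1 := by
      have h := Finset.card_sdiff_add_card_inter T' That
      omega
    obtain ⟨x', hx'⟩ := Finset.card_eq_one.mp hxcard
    obtain ⟨y', hy'⟩ := Finset.card_eq_one.mp hycard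
    have hsx : (That \ T').sum id = x' := by rw [hx']; simp
    have hsy : (T' \ That).sum id = y' := by rw [hy']; simp
    have hx'T : x' ∈ That ∧ x' ∉ T' := by
      have h : x' ∈ That \ T' := by rw [hx']; exact Finset.mem_singleton_self x'
      exact Finset.mem_sdiff.mp h
    have hy'T : y' ∈ T' ∧ y' ∉ That := by
      have h : y' ∈ T' \ That := by rw [hy']; exact Finset.mem_singleton_self y'
      exact Finset.mem_sdiff.mp h
    have hrec : T' = insert y' (That.erase x') := by
      ext a
      simp only [Finset.mem_insert, Finset.mem_erase]
      constructor
      · intro ha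
        by_cases haT : a ∈ That
        · exact Or.inr ⟨fun h => hx'T.2 (h ▸ ha), haT⟩
        · have h : a ∈ T' \ That := Finset.mem_sdiff.mpr ⟨ha, haT⟩
          rw [hy'] at h
          exact Or.inl (Finset.mem_singleton.mp h)
      · intro ha
        rcases ha with rfl | ⟨hax, haT⟩
        · exact hy'T.1
        · by_contra haT'
          have h : a ∈ That \ T' := Finset.mem_sdiff.mpr ⟨haT, haT'⟩
          rw [hx'] at h
          exact hax (Finset.mem_singleton.mp h)
    have htG0 : t ≤ (T' ∩ G0).card := hT'cov G0 hG0G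
    have hsml : (That.erase x' ∩ G0).card ≤ (That ∩ G0).card :=
      Finset.card_le_card (Finset.inter_subset_inter (Finset.erase_subset _ _) (subset_refl _))
    have hy'G0 : y' ∈ G0 := by
      by_contra hyG
      have hsub3 : T' ∩ G0 ⊆ That.erase x' ∩ G0 := by
        intro a ha
        rw [Finset.mem_inter] at ha ⊢
        have h := ha.1
        rw [hrec, Finset.mem_insert] at h
        rcases h with rfl | h
        · exact absurd ha.2 hyG
        · exact ⟨h, ha.2⟩
      have := Finset.card_le_card hsub3
      omega
    have hsub4 : T' ∩ G0 ⊆ insert y' (That.erase x' ∩ G0) := by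
      intro a ha
      rw [Finset.mem_inter] at ha
      have h := ha.1
      rw [hrec, Finset.mem_insert] at h
      rcases h with rfl | h
      · exact Finset.mem_insert_self _ _
      · exact Finset.mem_insert_of_mem (Finset.mem_inter.mpr ⟨h, ha.2⟩)
    have hc4 : (T' ∩ G0).card ≤ (That.erase x' ∩ G0).card + 1 :=
      le_trans (Finset.card_le_card hsub4) (Finset.card_insert_le _ _)
    have hG0eq : (That ∩ G0).card = t - 1 := by omega
    have hx'G0 : x' ∉ G0 := by
      intro hxG
      have hnm : x' ∉ That.erase x' ∩ G0 :=
        fun h => (Finset.mem_erase.mp (Finset.mem_inter.mp h).1).1 rfl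
      have hsub6 : insert x' (That.erase x' ∩ G0) ⊆ That ∩ G0 := by
        intro a ha
        rcases Finset.mem_insert.mp ha with rfl | h
        · exact Finset.mem_inter.mpr ⟨hx'T.1, hxG⟩
        · rw [Finset.mem_inter] at h ⊢
          exact ⟨Finset.mem_of_mem_erase h.1, h.2⟩
      have h7 : (That.erase x' ∩ G0).card + 1 ≤ (That ∩ G0).card := by
        rw [← Finset.card_insert_of_notMem hnm]
        exact Finset.card_le_card hsub6
      omega
    refine ⟨?_, ?_, ?_, hG0eq⟩
    · rw [hsx]; exact Finset.mem_sdiff.mpr ⟨hx'T.1, hx'G0⟩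
    · rw [hsy]; exact Finset.mem_sdiff.mpr ⟨hy'G0, hy'T.2⟩
    · rw [hsx, hsy]; exact hrec
  rcases Finset.eq_empty_or_nonempty (covers n t G) with he | ⟨T1, hT1⟩
  · simp [he]
  · have hG0eq : (That ∩ G0).card = t - 1 := (hstruct T1 hT1).2.2.2
    have hsdT : (That \ G0).card = 2 := by
      have h := Finset.card_sdiff_add_card_inter That G0
      omega
    have hsdG : (G0 \ That).card = l - t + 1 := by
      have h := Finset.card_sdiff_add_card_inter G0 That
      rw [Finset.inter_comm G0 That] at h
      omega
    have hmap : ∀ T' ∈ covers n t G,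
        ((That \ T').sum id, (T' \ That).sum id) ∈ (That \ G0) ×ˢ (G0 \ That) := by
      intro T' hT'
      rw [Finset.mem_product]
      exact ⟨(hstruct T' hT').1, (hstruct T' hT').2.1⟩
    have hinj : Set.InjOn (fun T' : Finset ℕ => ((That \ T').sum id, (T' \ That).sum id))
        ↑(covers n t G) := by
      intro A hA B hB hEq
      rw [Finset.mem_coe] at hA hB
      have h1 := (hstruct A hA).2.2.1
      have h2 := (hstruct B hB).2.2.1
      simp only [Prod.mk.injEq] at hEq
      rw [h1, h2, hEq.1, hEq.2]
    have hcard := Finset.card_le_card_of_injOn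
      (fun T' => ((That \ T').sum id, (T' \ That).sum id)) hmap hinj
    rw [Finset.card_product, hsdT, hsdG] at hcard
    omega
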